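/- arXiv:2602.03909 — 4 statements merged into one kernel-verified Lean document; each statement's English description precedes it below -/
import Mathlib

section
/- Let G be a finite simple graph and let u, v, x, y be four pairwise distinct vertices such that uv and xy are edges of G while uy and xv are not edges of G. Let G' be the graph obtained from G by deleting the edges uv and xy and adding the edges uy and xv. Then every vertex has the same degree in G' as in G, and σ(G) − σ(G') = −2·(d(u) − d(x))·(d(v) − d(y)). In particular, if d(u) > d(x) and d(v) < d(y), then σ(G) > σ(G'). -/
open Finset

variable {V : Type*}

noncomputable def sigmaIndex [Fintype V] (G : SimpleGraph V) : ℤ := by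
  classical
  exact ∑ e ∈ G.edgeFinset,
    Sym2.lift ⟨fun u v => ((G.degree u : ℤ) - (G.degree v : ℤ)) ^ 2, fun u v => by ring⟩ e

noncomputable def deg [Fintype V] (G : SimpleGraph V) (v : V) : ℕ := by
  classical
  exact G.degree v

noncomputable def nbrCount [Fintype V] (G : SimpleGraph V) (v : V) (P : V → Prop) : ℕ := by
  classical
  exact ((G.neighborFinset v).filter P).card

def IsCaterpillar [Fintype V] (G : SimpleGraph V) : Prop :=
  ∃ (u w : V) (P : G.Walk u w), P.IsPath ∧
    ∀ x : V, x ∈ P.support ∨ ∃ y ∈ P.support, G.Adj x y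

set_option linter.unreachableTactic false
set_option linter.unusedTactic false
set_option maxHeartbeats 1000000

set_option maxHeartbeats 1000000 in
lemma deg_swap_aux [Fintype V] (G G' : SimpleGraph V) (w p q : V)
    (hp : G.Adj w p) (hq : ¬G.Adj w q)
    (h : ∀ b, G'.Adj w b ↔ (G.Adj w b ∧ b ≠ p) ∨ b = q) : deg G' w = deg G w := by
  classical
  unfold deg
  rw [← SimpleGraph.card_neighborFinset_eq_degree, ← SimpleGraph.card_neighborFinset_eq_degree,
    SimpleGraph.neighborFinset_eq_filter, SimpleGraph.neighborFinset_eq_filter]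
  have hfil : univ.filter (G'.Adj w) = insert q ((univ.filter (G.Adj w)).erase p) := by
    ext b
    simp only [mem_filter, mem_univ, true_and, mem_insert, mem_erase, h b]
    tauto
  rw [hfil, card_insert_of_notMem (by simp [hq]), card_erase_of_mem (by simp [hp])]
  have : 0 < (univ.filter (G.Adj w)).card := card_pos.2 ⟨p, by simp [hp]⟩
  have heq : #(univ.filter (fun b => G.Adj w b)) = #(univ.filter (G.Adj w)) := by
    congr 1
  omega

lemma deg_same_aux [Fintype V] (G G' : SimpleGraph V) (w : V)
    (h : ∀ b, G'.Adj w b ↔ G.Adj w b) : deg G' w = deg G w := by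
  classical
  unfold deg
  rw [← SimpleGraph.card_neighborFinset_eq_degree, ← SimpleGraph.card_neighborFinset_eq_degree]
  congr 1
  ext b
  simp [h b]

lemma sigmaIndex_eq [Fintype V] (G : SimpleGraph V) :
    sigmaIndex G = ∑ e ∈ (by classical exact G.edgeFinset : Finset (Sym2 V)),
      Sym2.lift ⟨fun u v => ((deg G u : ℤ) - (deg G v : ℤ)) ^ 2, fun u v => by ring⟩ e := by
  unfold sigmaIndex deg
  rfl

/-- the degree-preserving edge swap and its effect on the sigma index. -/
theorem sigma_edge_swap {V : Type*} [Fintype V] (G : SimpleGraph V) (u v x y : V)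
    (huv' : u ≠ v) (hux : u ≠ x) (huy' : u ≠ y) (hvx : v ≠ x) (hvy : v ≠ y) (hxy' : x ≠ y)
    (huv : G.Adj u v) (hxy : G.Adj x y) (huy : ¬G.Adj u y) (hxv : ¬G.Adj x v)
    (G' : SimpleGraph V)
    (hG' : G' = (G.deleteEdges {s(u, v), s(x, y)}) ⊔ SimpleGraph.fromEdgeSet {s(u, y), s(x, v)}) :
    (∀ w : V, deg G' w = deg G w) ∧
    sigmaIndex G - sigmaIndex G' =
      -2 * ((deg G u : ℤ) - (deg G x : ℤ)) * ((deg G v : ℤ) - (deg G y : ℤ)) ∧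
    (deg G x < deg G u → deg G v < deg G y → sigmaIndex G' < sigmaIndex G) := by
  classical
  have hvu := huv.symm
  have hyx := hxy.symm
  have hyu : ¬G.Adj y u := fun h => huy h.symm
  have hvx' : ¬G.Adj v x := fun h => hxv h.symm
  have n1 := huv'.symm; have n2 := hux.symm; have n3 := huy'.symm
  have n4 := hvx.symm; have n5 := hvy.symm; have n6 := hxy'.symm
  have hAdj : ∀ a b : V, G'.Adj a b ↔ (G.Adj a b ∧ s(a,b) ≠ s(u,v) ∧ s(a,b) ≠ s(x,y)) ∨
      (s(a,b) = s(u,y) ∨ s(a,b) = s(x,v)) := by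
    intro a b
    rw [hG']
    simp only [SimpleGraph.sup_adj, SimpleGraph.deleteEdges_adj, SimpleGraph.fromEdgeSet_adj,
      Set.mem_insert_iff, Set.mem_singleton_iff, not_or]
    constructor
    · rintro (⟨h, h1, h2⟩ | ⟨h, _⟩) <;> tauto
    · rintro (⟨h, h1, h2⟩ | h | h)
      · tauto
      · right; refine ⟨by tauto, ?_⟩
        rw [Sym2.eq_iff] at h; rintro rfl
        obtain ⟨rfl, rfl⟩ | ⟨rfl, rfl⟩ := h <;> simp_all
      · right; refine ⟨by tauto, ?_⟩
        rw [Sym2.eq_iff] at h; rintro rfl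
        obtain ⟨rfl, rfl⟩ | ⟨rfl, rfl⟩ := h <;> simp_all
  -- degree preservation
  have hdeg : ∀ w : V, deg G' w = deg G w := by
    intro w
    by_cases hwu : w = u
    · subst hwu
      refine deg_swap_aux G G' w v y huv huy (fun b => ?_)
      rw [hAdj]
      simp only [Sym2.eq_iff, ne_eq]
      simp only [huv', hux, huy', hvx, hvy, hxy', n1, n2, n3, n4, n5, n6,
        eq_self_iff_true, true_and, false_and, and_false, or_false, false_or, not_false_iff]
      tauto
    · by_cases hwv : w = v
      · subst hwv
        refine deg_swap_aux G G' w u x hvu hvx' (fun b => ?_)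
        rw [hAdj]
        simp only [Sym2.eq_iff, ne_eq]
        simp only [huv', hux, huy', hvx, hvy, hxy', n1, n2, n3, n4, n5, n6,
          eq_self_iff_true, true_and, false_and, and_false, or_false, false_or, not_false_iff]
        tauto
      · by_cases hwx : w = x
        · subst hwx
          refine deg_swap_aux G G' w y v hxy hxv (fun b => ?_)
          rw [hAdj]
          simp only [Sym2.eq_iff, ne_eq]
          simp only [huv', hux, huy', hvx, hvy, hxy', n1, n2, n3, n4, n5, n6,
            eq_self_iff_true, true_and, false_and, and_false, or_false, false_or, not_false_iff] <;>
          tauto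
        · by_cases hwy : w = y
          · subst hwy
            refine deg_swap_aux G G' w x u hyx hyu (fun b => ?_)
            rw [hAdj]
            simp only [Sym2.eq_iff, ne_eq]
            simp only [huv', hux, huy', hvx, hvy, hxy', n1, n2, n3, n4, n5, n6,
              eq_self_iff_true, true_and, false_and, and_false, or_false, false_or, not_false_iff] <;>
            tauto
          · refine deg_same_aux G G' w (fun b => ?_)
            rw [hAdj]
            simp only [Sym2.eq_iff, ne_eq]
            simp only [hwu, hwv, hwx, hwy, eq_self_iff_true, true_and, false_and, and_false,
              or_false, false_or, not_false_iff, and_true] <;>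
            tauto
  refine ⟨hdeg, ?_⟩
  -- edge finset of G'
  have hedge : G'.edgeFinset = insert s(u,y) (insert s(x,v)
      ((G.edgeFinset.erase s(u,v)).erase s(x,y))) := by
    ext e
    induction e with
    | _ a b =>
      simp only [SimpleGraph.mem_edgeFinset, mem_insert, mem_erase, SimpleGraph.mem_edgeSet,
        hAdj a b]
      tauto
  set f : Sym2 V → ℤ :=
    Sym2.lift ⟨fun a b => ((deg G a : ℤ) - (deg G b : ℤ)) ^ 2, fun a b => by ring⟩ with hf
  have hs : sigmaIndex G = ∑ e ∈ G.edgeFinset, f e := by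
    rw [sigmaIndex_eq]
  have hs' : sigmaIndex G' = ∑ e ∈ G'.edgeFinset, f e := by
    rw [sigmaIndex_eq]
    apply Finset.sum_congr rfl
    intro e _
    induction e with
    | _ a b => simp only [hf, Sym2.lift_mk, hdeg a, hdeg b]
  -- membership facts
  have hne1 : s(u,y) ≠ s(x,v) := by
    simp only [ne_eq, Sym2.eq_iff]
    rintro (⟨rfl, rfl⟩ | ⟨rfl, rfl⟩) <;> simp_all
  have hmuv : s(u,v) ∈ G.edgeFinset := by simpa [SimpleGraph.mem_edgeFinset] using huv
  have hmxy : s(x,y) ∈ G.edgeFinset.erase s(u,v) := by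
    refine mem_erase.2 ⟨?_, by simpa [SimpleGraph.mem_edgeFinset] using hxy⟩
    simp only [ne_eq, Sym2.eq_iff]
    rintro (⟨rfl, rfl⟩ | ⟨rfl, rfl⟩) <;> simp_all
  have hnm1 : s(x,v) ∉ (G.edgeFinset.erase s(u,v)).erase s(x,y) := by
    simp only [mem_erase, SimpleGraph.mem_edgeFinset, SimpleGraph.mem_edgeSet]
    tauto
  have hnm2 : s(u,y) ∉ insert s(x,v) ((G.edgeFinset.erase s(u,v)).erase s(x,y)) := by
    simp only [mem_insert, mem_erase, SimpleGraph.mem_edgeFinset, SimpleGraph.mem_edgeSet]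
    push_neg
    exact ⟨hne1, fun _ _ => huy⟩
  have hsum : sigmaIndex G' = f s(u,y) + f s(x,v) + (sigmaIndex G - f s(u,v) - f s(x,y)) := by
    rw [hs', hedge, sum_insert hnm2, sum_insert hnm1, sum_erase_eq_sub hmxy,
      sum_erase_eq_sub hmuv, hs]
    ring
  have key : sigmaIndex G - sigmaIndex G' =
      -2 * ((deg G u : ℤ) - (deg G x : ℤ)) * ((deg G v : ℤ) - (deg G y : ℤ)) := by
    rw [hsum, hf]
    simp only [Sym2.lift_mk]
    ring
  refine ⟨key, fun h1 h2 => ?_⟩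
  have h1' : (deg G x : ℤ) < (deg G u : ℤ) := by exact_mod_cast h1
  have h2' : (deg G v : ℤ) < (deg G y : ℤ) := by exact_mod_cast h2
  nlinarith [key]
end

section
/- Let m ≥ 1 and let C(n,m) be the caterpillar tree consisting of a spine path x₁,…,xₙ together with exactly m pendant leaves attached to each spine vertex. Then the Albertson index satisfies irr(C(n,m)) = m(m+1)n − 2m + 2 if n ≥ 3, and irr(C(n,m)) = m(m+1)n − 2m if n ∈ {1, 2}. -/
open Finset

variable {V : Type*}

/-- Parent-child/spine adjacency of the caterpillar `C(n,m)`: spine vertices `Sum.inl i`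
form a path, and leaf `Sum.inr (i, k)` is attached to spine vertex `Sum.inl i`. -/
def caterpillarAdj (n m : ℕ) : (Fin n ⊕ Fin n × Fin m) → (Fin n ⊕ Fin n × Fin m) → Prop
  | Sum.inl i, Sum.inl j => (i : ℕ) + 1 = (j : ℕ) ∨ (j : ℕ) + 1 = (i : ℕ)
  | Sum.inl i, Sum.inr q => i = q.1
  | Sum.inr q, Sum.inl i => i = q.1
  | Sum.inr _, Sum.inr _ => False

/-- The caterpillar `C(n,m)`: a spine path `x₁, …, xₙ` with exactly `m` pendant leaves
attached to each spine vertex. -/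
def caterpillarGraph (n m : ℕ) : SimpleGraph (Fin n ⊕ Fin n × Fin m) where
  Adj := caterpillarAdj n m
  symm := by
    constructor
    rintro (i | q) (j | q') h <;> simp_all [caterpillarAdj] <;> tauto
  loopless := by
    constructor
    rintro (i | q) h <;> simp_all [caterpillarAdj]

/-- The Albertson irregularity index `irr(G) = Σ_{uv ∈ E} |d(u) - d(v)|`. -/
noncomputable def albertsonIndex {W : Type*} [Fintype W] (G : SimpleGraph W) : ℤ := by
  classical
  exact ∑ e ∈ G.edgeFinset,
    Sym2.lift ⟨fun u v => |(G.degree u : ℤ) - (G.degree v : ℤ)|, fun u v => abs_sub_comm _ _⟩ e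


section AlbertsonAux

lemma two_mul_sum_edgeFinset' {W : Type*} [Fintype W] [DecidableEq W]
    (G : SimpleGraph W) [DecidableRel G.Adj] [Fintype G.edgeSet]
    (f : W → W → ℤ) (hf : ∀ u v, f u v = f v u) :
    2 * ∑ e ∈ G.edgeFinset, Sym2.lift ⟨f, hf⟩ e =
      ∑ u, ∑ v, if G.Adj u v then f u v else 0 := by
  classical
  have hmaps : ∀ p ∈ (univ ×ˢ univ).filter (fun p : W × W => G.Adj p.1 p.2),
      Sym2.mk p.1 p.2 ∈ G.edgeFinset := by
    intro p hp
    simp only [mem_filter] at hp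
    simpa [SimpleGraph.mem_edgeFinset] using hp.2
  have key := Finset.sum_fiberwise_of_maps_to hmaps
    (fun p : W × W => Sym2.lift ⟨f, hf⟩ (Sym2.mk p.1 p.2))
  have hfib : ∀ e ∈ G.edgeFinset,
      ∑ p ∈ ((univ ×ˢ univ).filter (fun p : W × W => G.Adj p.1 p.2)).filter
        (fun p => Sym2.mk p.1 p.2 = e), Sym2.lift ⟨f, hf⟩ (Sym2.mk p.1 p.2)
      = 2 * Sym2.lift ⟨f, hf⟩ e := by
    intro e he
    induction e with
    | _ a b =>
      rw [SimpleGraph.mem_edgeFinset, SimpleGraph.mem_edgeSet] at he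
      have hab : a ≠ b := he.ne
      have hset : ((univ ×ˢ univ).filter (fun p : W × W => G.Adj p.1 p.2)).filter
          (fun p => Sym2.mk p.1 p.2 = s(a, b)) = {(a, b), (b, a)} := by
        ext ⟨x, y⟩
        simp only [mem_filter, mem_product, mem_univ, true_and, mem_insert,
          mem_singleton, Sym2.eq_iff, Prod.mk.injEq]
        constructor
        · rintro ⟨-, (⟨rfl, rfl⟩ | ⟨rfl, rfl⟩)⟩
          · exact Or.inl ⟨rfl, rfl⟩
          · exact Or.inr ⟨rfl, rfl⟩
        · rintro (⟨rfl, rfl⟩ | ⟨rfl, rfl⟩)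
          · exact ⟨he, Or.inl ⟨rfl, rfl⟩⟩
          · exact ⟨he.symm, Or.inr ⟨rfl, rfl⟩⟩
      rw [hset, Finset.sum_pair (by simp [hab, Prod.ext_iff])]
      simp only [Sym2.lift_mk]
      rw [hf b a]
      ring
  calc 2 * ∑ e ∈ G.edgeFinset, Sym2.lift ⟨f, hf⟩ e
      = ∑ e ∈ G.edgeFinset, 2 * Sym2.lift ⟨f, hf⟩ e := by rw [Finset.mul_sum]
    _ = ∑ e ∈ G.edgeFinset,
        ∑ p ∈ ((univ ×ˢ univ).filter (fun p : W × W => G.Adj p.1 p.2)).filter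
          (fun p => Sym2.mk p.1 p.2 = e), Sym2.lift ⟨f, hf⟩ (Sym2.mk p.1 p.2) :=
        (Finset.sum_congr rfl hfib).symm
    _ = ∑ p ∈ (univ ×ˢ univ).filter (fun p : W × W => G.Adj p.1 p.2),
          Sym2.lift ⟨f, hf⟩ (Sym2.mk p.1 p.2) := key
    _ = ∑ u, ∑ v, if G.Adj u v then f u v else 0 := by
        rw [Finset.sum_filter, Finset.sum_product]
        simp [Sym2.lift_mk]

lemma two_mul_albertson' {W : Type*} [Fintype W] [DecidableEq W]
    (G : SimpleGraph W) [DecidableRel G.Adj] :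
    2 * albertsonIndex G =
      ∑ u, ∑ v, if G.Adj u v then |(G.degree u : ℤ) - (G.degree v : ℤ)| else 0 := by
  rw [show albertsonIndex G = ∑ e ∈ G.edgeFinset,
      Sym2.lift ⟨fun u v => |(G.degree u : ℤ) - (G.degree v : ℤ)|,
        fun u v => abs_sub_comm _ _⟩ e from by unfold albertsonIndex; congr!]
  exact two_mul_sum_edgeFinset' G _ _

instance catDec (n m : ℕ) : DecidableRel (caterpillarGraph n m).Adj
  | Sum.inl i, Sum.inl j =>
      inferInstanceAs (Decidable ((i : ℕ) + 1 = (j : ℕ) ∨ (j : ℕ) + 1 = (i : ℕ)))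
  | Sum.inl i, Sum.inr q => inferInstanceAs (Decidable (i = q.1))
  | Sum.inr q, Sum.inl i => inferInstanceAs (Decidable (i = q.1))
  | Sum.inr _, Sum.inr _ => inferInstanceAs (Decidable False)

/-- The degree of spine vertex `i`, as an integer-valued function of `i : ℕ`. -/
def eAux (n m i : ℕ) : ℤ :=
  (m : ℤ) + ((if 0 < i then 1 else 0) + (if i + 1 < n then 1 else 0))

lemma cat_degree_inr (n m : ℕ) (q : Fin n × Fin m) :
    (caterpillarGraph n m).degree (Sum.inr q) = 1 := by
  rw [← SimpleGraph.card_neighborFinset_eq_degree, SimpleGraph.neighborFinset_eq_filter,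
    Finset.card_filter, Fintype.sum_sum_type]
  simp only [caterpillarGraph, caterpillarAdj]
  erw [Finset.sum_ite_eq' univ q.1 (fun _ => 1)]
  simp

lemma cat_degree_inl (n m : ℕ) (i : Fin n) :
    ((caterpillarGraph n m).degree (Sum.inl i) : ℤ) = eAux n m (i : ℕ) := by
  rw [← SimpleGraph.card_neighborFinset_eq_degree, SimpleGraph.neighborFinset_eq_filter,
    Finset.card_filter, Fintype.sum_sum_type]
  simp only [caterpillarGraph, caterpillarAdj]
  have h2 : ∑ q : Fin n × Fin m, (if i = q.1 then (1:ℕ) else 0) = m := by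
    have step : ∀ a : Fin n, (∑ _b : Fin m, if i = a then (1:ℕ) else 0)
        = if i = a then m else 0 := by
      intro a; split_ifs <;> simp
    rw [Fintype.sum_prod_type, Finset.sum_congr rfl (fun a _ => step a),
      Finset.sum_ite_eq univ i (fun _ => m)]
    simp
  have h1 : ∑ j : Fin n, (if ((i:ℕ) + 1 = (j:ℕ) ∨ (j:ℕ) + 1 = (i:ℕ)) then (1:ℕ) else 0)
      = (if 0 < (i:ℕ) then 1 else 0) + (if (i:ℕ) + 1 < n then 1 else 0) := by
    rw [Fin.sum_univ_eq_sum_range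
      (fun j => if ((i:ℕ) + 1 = j ∨ j + 1 = (i:ℕ)) then (1:ℕ) else 0) n]
    have split : ∀ j ∈ range n, (if ((i:ℕ) + 1 = j ∨ j + 1 = (i:ℕ)) then (1:ℕ) else 0)
        = (if (i:ℕ) + 1 = j then 1 else 0)
          + (if j = (i:ℕ) - 1 then (if 0 < (i:ℕ) then 1 else 0) else 0) := by
      intro j hj; rw [mem_range] at hj; split_ifs <;> omega
    rw [Finset.sum_congr rfl split, Finset.sum_add_distrib,
      Finset.sum_ite_eq (range n) ((i:ℕ) + 1) (fun _ => 1),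
      Finset.sum_ite_eq' (range n) ((i:ℕ) - 1) (fun _ => if 0 < (i:ℕ) then 1 else 0)]
    have := i.isLt
    simp only [mem_range]
    split_ifs <;> omega
  erw [h1, h2]
  rw [eAux]
  have := i.isLt
  push_cast
  split_ifs <;> push_cast <;> ring

lemma cat_adj_ll (n m : ℕ) (i j : Fin n) :
    (caterpillarGraph n m).Adj (Sum.inl i) (Sum.inl j) ↔
      ((i:ℕ) + 1 = (j:ℕ) ∨ (j:ℕ) + 1 = (i:ℕ)) := Iff.rfl
lemma cat_adj_lr (n m : ℕ) (i : Fin n) (q : Fin n × Fin m) :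
    (caterpillarGraph n m).Adj (Sum.inl i) (Sum.inr q) ↔ i = q.1 := Iff.rfl
lemma cat_adj_rl (n m : ℕ) (i : Fin n) (q : Fin n × Fin m) :
    (caterpillarGraph n m).Adj (Sum.inr q) (Sum.inl i) ↔ i = q.1 := Iff.rfl
lemma cat_adj_rr (n m : ℕ) (q q' : Fin n × Fin m) :
    (caterpillarGraph n m).Adj (Sum.inr q) (Sum.inr q') ↔ False := Iff.rfl

lemma cat_sumAbs (n m : ℕ) (hm : 1 ≤ m) (hn : 1 ≤ n) :
    ∑ i ∈ range n, |eAux n m i - 1| = (n : ℤ) * m + n - 2 := by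
  have step : ∀ i ∈ range n, |eAux n m i - 1|
      = ((m : ℤ) - 1) + ((1 - if i = 0 then (1:ℤ) else 0)
          + (1 - if i = n - 1 then (1:ℤ) else 0)) := by
    intro i hi; rw [mem_range] at hi
    rcases abs_cases (eAux n m i - 1) with ⟨h, h'⟩ | ⟨h, h'⟩ <;> rw [h] <;>
      simp only [eAux] at h' ⊢ <;> split_ifs at h' ⊢ <;> omega
  rw [Finset.sum_congr rfl step]
  simp only [Finset.sum_add_distrib, Finset.sum_sub_distrib, Finset.sum_const, card_range,
    Finset.sum_ite_eq' (range n) 0 (fun _ => (1:ℤ)),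
    Finset.sum_ite_eq' (range n) (n - 1) (fun _ => (1:ℤ)), mem_range, smul_eq_mul]
  rw [if_pos (by omega : 0 < n), if_pos (by omega : n - 1 < n)]
  simp only [nsmul_eq_mul, mul_one]
  push_cast
  ring

lemma cat_T1shape (n m : ℕ) :
    (∑ i ∈ range n, ∑ j ∈ range n,
        if (i + 1 = j ∨ j + 1 = i) then |eAux n m i - eAux n m j| else 0)
    = ∑ i ∈ range n, ((if i + 1 < n then |eAux n m i - eAux n m (i + 1)| else 0)
      + (if i - 1 < n then (if 0 < i then |eAux n m i - eAux n m (i - 1)| else 0) else 0)) := by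
  refine Finset.sum_congr rfl fun i hi => ?_
  rw [mem_range] at hi
  have hsplit : ∀ j ∈ range n, (if (i + 1 = j ∨ j + 1 = i) then |eAux n m i - eAux n m j| else 0)
      = (if i + 1 = j then |eAux n m i - eAux n m j| else 0)
        + (if j = i - 1 then (if 0 < i then |eAux n m i - eAux n m (i - 1)| else 0) else 0) := by
    intro j hj; rw [mem_range] at hj
    by_cases h2 : j = i - 1
    · subst h2; split_ifs <;> first | omega | ring
    · have hji : ¬ (j + 1 = i) := by omega
      split_ifs <;> first | omega | ring
  rw [Finset.sum_congr rfl hsplit, Finset.sum_add_distrib,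
    Finset.sum_ite_eq (range n) (i + 1) (fun j => |eAux n m i - eAux n m j|),
    Finset.sum_ite_eq' (range n) (i - 1)
      (fun _ => if 0 < i then |eAux n m i - eAux n m (i - 1)| else 0)]
  simp only [mem_range]

lemma cat_T1eval (n m : ℕ) :
    (∑ i ∈ range n, ((if i + 1 < n then |eAux n m i - eAux n m (i + 1)| else 0)
      + (if i - 1 < n then (if 0 < i then |eAux n m i - eAux n m (i - 1)| else 0) else 0)))
    = if 3 ≤ n then 4 else 0 := by
  by_cases hn : 3 ≤ n
  · rw [if_pos hn]
    have t1 : ∀ i < n, (if i + 1 < n then |eAux n m i - eAux n m (i + 1)| else 0)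
        = (if i = 0 then (1:ℤ) else 0) + (if i = n - 2 then (1:ℤ) else 0) := by
      intro i hi
      by_cases h : i + 1 < n
      · rw [if_pos h]
        rcases abs_cases (eAux n m i - eAux n m (i + 1)) with ⟨h1, h1'⟩ | ⟨h1, h1'⟩ <;> rw [h1] <;>
          simp only [eAux] at h1' ⊢ <;> split_ifs at h1' ⊢ <;> omega
      · rw [if_neg h]; split_ifs <;> omega
    have t2 : ∀ i < n,
        (if i - 1 < n then (if 0 < i then |eAux n m i - eAux n m (i - 1)| else 0) else 0)
        = (if i = 1 then (1:ℤ) else 0) + (if i = n - 1 then (1:ℤ) else 0) := by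
      intro i hi
      rw [if_pos (by omega : i - 1 < n)]
      by_cases h : 0 < i
      · rw [if_pos h]
        rcases abs_cases (eAux n m i - eAux n m (i - 1)) with ⟨h1, h1'⟩ | ⟨h1, h1'⟩ <;> rw [h1] <;>
          simp only [eAux] at h1' ⊢ <;> split_ifs at h1' ⊢ <;> omega
      · rw [if_neg h]; split_ifs <;> omega
    have step : ∀ i ∈ range n,
        ((if i + 1 < n then |eAux n m i - eAux n m (i + 1)| else 0)
          + (if i - 1 < n then (if 0 < i then |eAux n m i - eAux n m (i - 1)| else 0) else 0))
        = ((if i = 0 then (1:ℤ) else 0) + (if i = n - 2 then (1:ℤ) else 0))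
          + ((if i = 1 then (1:ℤ) else 0) + (if i = n - 1 then (1:ℤ) else 0)) := by
      intro i hi; rw [mem_range] at hi; rw [t1 i hi, t2 i hi]
    rw [Finset.sum_congr rfl step]
    simp only [Finset.sum_add_distrib,
      Finset.sum_ite_eq' (range n) 0 (fun _ => (1:ℤ)),
      Finset.sum_ite_eq' (range n) (n - 2) (fun _ => (1:ℤ)),
      Finset.sum_ite_eq' (range n) 1 (fun _ => (1:ℤ)),
      Finset.sum_ite_eq' (range n) (n - 1) (fun _ => (1:ℤ)), mem_range]
    rw [if_pos (by omega : 0 < n), if_pos (by omega : n - 2 < n),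
      if_pos (by omega : 1 < n), if_pos (by omega : n - 1 < n)]
    norm_num
  · rw [if_neg hn]
    have t1 : ∀ i < n, (if i + 1 < n then |eAux n m i - eAux n m (i + 1)| else 0) = 0 := by
      intro i hi
      by_cases h : i + 1 < n
      · rw [if_pos h]
        rcases abs_cases (eAux n m i - eAux n m (i + 1)) with ⟨h1, h1'⟩ | ⟨h1, h1'⟩ <;> rw [h1] <;>
          simp only [eAux] at h1' ⊢ <;> split_ifs at h1' ⊢ <;> omega
      · rw [if_neg h]
    have t2 : ∀ i < n,
        (if i - 1 < n then (if 0 < i then |eAux n m i - eAux n m (i - 1)| else 0) else 0) = 0 := by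
      intro i hi
      rw [if_pos (by omega : i - 1 < n)]
      by_cases h : 0 < i
      · rw [if_pos h]
        rcases abs_cases (eAux n m i - eAux n m (i - 1)) with ⟨h1, h1'⟩ | ⟨h1, h1'⟩ <;> rw [h1] <;>
          simp only [eAux] at h1' ⊢ <;> split_ifs at h1' ⊢ <;> omega
      · rw [if_neg h]
    have step : ∀ i ∈ range n,
        ((if i + 1 < n then |eAux n m i - eAux n m (i + 1)| else 0)
          + (if i - 1 < n then (if 0 < i then |eAux n m i - eAux n m (i - 1)| else 0) else 0))
        = 0 := by
      intro i hi; rw [mem_range] at hi; rw [t1 i hi, t2 i hi, add_zero]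
    rw [Finset.sum_congr rfl step, Finset.sum_const_zero]

lemma cat_two_mul_albertson (n m : ℕ) (hm : 1 ≤ m) (hn : 1 ≤ n) :
    2 * albertsonIndex (caterpillarGraph n m)
      = (if 3 ≤ n then (4:ℤ) else 0) + 2 * ((m : ℤ) * ((n : ℤ) * m + n - 2)) := by
  rw [two_mul_albertson']
  simp only [Fintype.sum_sum_type, cat_adj_ll, cat_adj_lr, cat_adj_rl, cat_adj_rr,
    cat_degree_inl, cat_degree_inr, Nat.cast_one, if_false, Finset.sum_const_zero, add_zero]
  have hQ2 : ∀ i : Fin n, (∑ q : Fin n × Fin m, if i = q.1 then |eAux n m (i:ℕ) - 1| else 0)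
      = (m : ℤ) * |eAux n m (i:ℕ) - 1| := by
    intro i
    have step : ∀ a : Fin n, (∑ _b : Fin m, if i = a then |eAux n m (i:ℕ) - 1| else 0)
        = if i = a then (m : ℤ) * |eAux n m (i:ℕ) - 1| else 0 := by
      intro a; split_ifs <;> simp [mul_comm]
    rw [Fintype.sum_prod_type, Finset.sum_congr rfl (fun a _ => step a),
      Finset.sum_ite_eq univ i (fun _ => (m : ℤ) * |eAux n m (i:ℕ) - 1|)]
    simp
  have hQ3 : ∀ q : Fin n × Fin m, (∑ j : Fin n, if j = q.1 then |1 - eAux n m (j:ℕ)| else 0)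
      = |eAux n m ((q.1 : Fin n) : ℕ) - 1| := by
    intro q
    rw [Finset.sum_ite_eq' univ q.1 (fun j => |1 - eAux n m (j:ℕ)|)]
    simp [abs_sub_comm]
  have hQ3' : (∑ q : Fin n × Fin m, |eAux n m ((q.1 : Fin n) : ℕ) - 1|)
      = (m : ℤ) * ∑ i : Fin n, |eAux n m (i:ℕ) - 1| := by
    rw [Fintype.sum_prod_type]
    simp [Finset.sum_const, card_univ, mul_comm, Finset.mul_sum]
  simp only [hQ2, hQ3]
  rw [Finset.sum_add_distrib, hQ3', ← Finset.mul_sum]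
  have c1 : ∀ i : ℕ, (∑ j : Fin n,
      if (i + 1 = (j:ℕ) ∨ (j:ℕ) + 1 = i) then |eAux n m i - eAux n m (j:ℕ)| else 0)
      = ∑ j ∈ range n, (if (i + 1 = j ∨ j + 1 = i) then |eAux n m i - eAux n m j| else 0) :=
    fun i => Fin.sum_univ_eq_sum_range
      (fun j => if (i + 1 = j ∨ j + 1 = i) then |eAux n m i - eAux n m j| else 0) n
  simp only [c1]
  rw [Fin.sum_univ_eq_sum_range
    (fun i => ∑ j ∈ range n, (if (i + 1 = j ∨ j + 1 = i) then |eAux n m i - eAux n m j| else 0)) n]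
  rw [Fin.sum_univ_eq_sum_range (fun i => |eAux n m i - 1|) n]
  rw [cat_T1shape, cat_T1eval, cat_sumAbs n m hm hn]
  ring

end AlbertsonAux

/-- the Albertson index of the caterpillar `C(n,m)`. -/
theorem albertson_caterpillarGraph (n m : ℕ) (hm : 1 ≤ m) :
    (3 ≤ n → albertsonIndex (caterpillarGraph n m) =
      (m : ℤ) * ((m : ℤ) + 1) * (n : ℤ) - 2 * (m : ℤ) + 2) ∧
    (n = 1 ∨ n = 2 → albertsonIndex (caterpillarGraph n m) =
      (m : ℤ) * ((m : ℤ) + 1) * (n : ℤ) - 2 * (m : ℤ)) := by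
  constructor
  · intro hn3
    have h2 : 2 * albertsonIndex (caterpillarGraph n m)
        = 2 * ((m : ℤ) * ((m : ℤ) + 1) * (n : ℤ) - 2 * (m : ℤ) + 2) := by
      rw [cat_two_mul_albertson n m hm (by omega), if_pos hn3]
      ring
    exact mul_left_cancel₀ two_ne_zero h2
  · rintro (rfl | rfl)
    · have h2 : 2 * albertsonIndex (caterpillarGraph 1 m)
          = 2 * ((m : ℤ) * ((m : ℤ) + 1) * ((1:ℕ) : ℤ) - 2 * (m : ℤ)) := by
        rw [cat_two_mul_albertson 1 m hm le_rfl, if_neg (by omega)]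
        push_cast
        ring
      exact mul_left_cancel₀ two_ne_zero h2
    · have h2 : 2 * albertsonIndex (caterpillarGraph 2 m)
          = 2 * ((m : ℤ) * ((m : ℤ) + 1) * ((2:ℕ) : ℤ) - 2 * (m : ℤ)) := by
        rw [cat_two_mul_albertson 2 m hm (by omega), if_neg (by omega)]
        push_cast
        ring
      exact mul_left_cancel₀ two_ne_zero h2
end

section
/- Let n ≥ 3 and p, r, s ≥ 1, and let T be a tree with the following structure: a spine path v₁,…,vₙ with d(v₁) = d(vₙ) = p+1 and d(vᵢ) = p+2 for 2 ≤ i ≤ n−1; each spine vertex is adjacent to exactly p first-level pendant vertices, each of degree 1+r; each first-level pendant vertex is adjacent to exactly r second-level pendant vertices, each of degree 1+s; each second-level pendant vertex is adjacent to exactly s leaves of degree 1; and T has no other vertices or edges. Then σ(T) = n·p·r·s³ + p(n−2)(p+1−r)² + 2p(p−r)² + n·p·r·(r−s)² + 2. -/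
open Finset

variable {V : Type*}

noncomputable def edgeVal [Fintype V] (G : SimpleGraph V) : Sym2 V → ℤ := by
  classical
  exact Sym2.lift ⟨fun u w => ((G.degree u : ℤ) - (G.degree w : ℤ)) ^ 2, fun u w => by ring⟩

def lvlPair (level : V → ℕ) : Sym2 V → ℕ × ℕ :=
  Sym2.lift ⟨fun u w => (min (level u) (level w), max (level u) (level w)),
    fun u w => by simp only [min_comm, max_comm]⟩

lemma lvlPair_mk (level : V → ℕ) (u w : V) :
    lvlPair level s(u, w) = (min (level u) (level w), max (level u) (level w)) := rfl

lemma sigmaIndex_eq_s8 [Fintype V] (G : SimpleGraph V) [DecidableRel G.Adj] :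
    sigmaIndex G = ∑ e ∈ G.edgeFinset, edgeVal G e := by
  unfold sigmaIndex edgeVal
  congr!

lemma edgeVal_mk [Fintype V] (G : SimpleGraph V) [DecidableRel G.Adj] (u w : V) :
    edgeVal G s(u, w) = ((deg G u : ℤ) - (deg G w : ℤ)) ^ 2 := by
  unfold edgeVal deg
  rw [Sym2.lift_mk]

lemma deg_eq [Fintype V] (G : SimpleGraph V) [DecidableRel G.Adj] (w : V) :
    deg G w = G.degree w := by
  unfold deg; congr!

lemma nbrCount_eq [Fintype V] (G : SimpleGraph V) [DecidableRel G.Adj] (w : V)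
    (P : V → Prop) [DecidablePred P] :
    nbrCount G w P = ((G.neighborFinset w).filter P).card := by
  unfold nbrCount; congr!

/-- sum over an edge class (a,b), a < b, equals the double sum over lower endpoints. -/
lemma class_sum [Fintype V] (G : SimpleGraph V) [DecidableRel G.Adj] (level : V → ℕ)
    {a b : ℕ} (hab : a < b) (F : Sym2 V → ℤ) :
    ∑ e ∈ G.edgeFinset.filter (fun e => lvlPair level e = (a, b)), F e =
      ∑ w ∈ univ.filter (fun w => level w = a),
        ∑ x ∈ (G.neighborFinset w).filter (fun x => level x = b), F s(w, x) := by
  classical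
  symm
  rw [Finset.sum_sigma']
  refine Finset.sum_bij (fun z _ => s(z.1, z.2)) ?_ ?_ ?_ ?_
  · rintro ⟨w, x⟩ hz
    simp only [Finset.mem_sigma, Finset.mem_filter, Finset.mem_univ, true_and,
      SimpleGraph.mem_neighborFinset] at hz
    simp only [Finset.mem_filter, SimpleGraph.mem_edgeFinset, SimpleGraph.mem_edgeSet,
      lvlPair_mk]
    refine ⟨hz.2.1, ?_⟩
    rw [hz.1, hz.2.2]
    simp [min_eq_left hab.le, max_eq_right hab.le]
  · rintro ⟨w1, x1⟩ h1 ⟨w2, x2⟩ h2 heq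
    simp only [Finset.mem_sigma, Finset.mem_filter, Finset.mem_univ, true_and,
      SimpleGraph.mem_neighborFinset] at h1 h2
    rw [Sym2.eq_iff] at heq
    rcases heq with ⟨rfl, rfl⟩ | ⟨rfl, rfl⟩
    · rfl
    · dsimp only at h1 h2; omega
  · intro e he
    simp only [Finset.mem_filter, SimpleGraph.mem_edgeFinset, SimpleGraph.mem_edgeSet] at he
    induction e using Sym2.ind with
    | _ u w =>
      rw [lvlPair_mk, Prod.mk.injEq] at he
      obtain ⟨hadj, hmin, hmax⟩ := he
      rcases le_total (level u) (level w) with hle | hle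
      · refine ⟨⟨u, w⟩, ?_, rfl⟩
        simp only [Finset.mem_sigma, Finset.mem_filter, Finset.mem_univ, true_and,
          SimpleGraph.mem_neighborFinset]
        rw [min_eq_left hle] at hmin
        rw [max_eq_right hle] at hmax
        exact ⟨hmin, hadj, hmax⟩
      · refine ⟨⟨w, u⟩, ?_, Sym2.eq_swap⟩
        simp only [Finset.mem_sigma, Finset.mem_filter, Finset.mem_univ, true_and,
          SimpleGraph.mem_neighborFinset]
        rw [min_eq_right hle] at hmin
        rw [max_eq_left hle] at hmax
        exact ⟨hmin, hadj.symm, hmax⟩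
  · intros; rfl

lemma double_count [Fintype V] (G : SimpleGraph V) [DecidableRel G.Adj]
    (P Q : V → Prop) [DecidablePred P] [DecidablePred Q] :
    ∑ w ∈ univ.filter P, ((G.neighborFinset w).filter Q).card
      = ∑ x ∈ univ.filter Q, ((G.neighborFinset x).filter P).card := by
  have key : ∀ (A B : V → Prop) (iA : DecidablePred A) (iB : DecidablePred B),
      ∑ w ∈ univ.filter A, ((G.neighborFinset w).filter B).card
        = ∑ w ∈ (univ : Finset V), ∑ x ∈ (univ : Finset V),
            if A w ∧ B x ∧ G.Adj w x then 1 else 0 := by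
    intro A B _ _
    rw [Finset.sum_filter]
    refine Finset.sum_congr rfl fun w _ => ?_
    have hset : (G.neighborFinset w).filter B
        = univ.filter (fun x => B x ∧ G.Adj w x) := by
      ext x
      simp [SimpleGraph.mem_neighborFinset, and_comm]
    by_cases hA : A w
    · simp only [hA, if_true, true_and, hset, Finset.card_filter]
    · simp [hA]
  rw [key P Q inferInstance inferInstance, key Q P inferInstance inferInstance,
    Finset.sum_comm]
  refine Finset.sum_congr rfl fun x _ => Finset.sum_congr rfl fun w _ => ?_
  by_cases hP : P w <;> by_cases hQ : Q x <;> simp [hP, hQ, G.adj_comm]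

/-- sigma index of the three-level tree of Problem 1. The spine is
`v 0, …, v (n-1)` (level 0), each spine vertex has `p` first-level pendants of degree
`1 + r`, each first-level pendant has `r` second-level pendants of degree `1 + s`, and
each second-level pendant has `s` leaves (level 3). -/
theorem sigma_three_level_tree {V : Type*} [Fintype V] (G : SimpleGraph V)
    (n p r s : ℕ) (v : Fin n → V) (level : V → ℕ)
    (hn : 3 ≤ n) (hp : 1 ≤ p) (hr : 1 ≤ r) (hs : 1 ≤ s)
    (htree : G.IsTree)
    (hinj : Function.Injective v)
    (hlevel0 : ∀ w : V, level w = 0 ↔ ∃ i, w = v i)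
    (hlevelle : ∀ w : V, level w ≤ 3)
    (hspine : ∀ i j : Fin n, G.Adj (v i) (v j) ↔ ((i : ℕ) + 1 = (j : ℕ) ∨ (j : ℕ) + 1 = (i : ℕ)))
    (hconsec : ∀ w x : V, G.Adj w x →
      (level w = 0 ∧ level x = 0) ∨ level x = level w + 1 ∨ level w = level x + 1)
    (hdegEnd : deg G (v ⟨0, by omega⟩) = p + 1 ∧ deg G (v ⟨n - 1, by omega⟩) = p + 1)
    (hdegInt : ∀ i : Fin n, 0 < (i : ℕ) → (i : ℕ) < n - 1 → deg G (v i) = p + 2)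
    (hchild0 : ∀ i : Fin n, nbrCount G (v i) (fun w => level w = 1) = p)
    (hdeg1 : ∀ w : V, level w = 1 → deg G w = 1 + r)
    (hchild1 : ∀ w : V, level w = 1 → nbrCount G w (fun x => level x = 2) = r)
    (hdeg2 : ∀ w : V, level w = 2 → deg G w = 1 + s)
    (hchild2 : ∀ w : V, level w = 2 → nbrCount G w (fun x => level x = 3) = s)
    (hdeg3 : ∀ w : V, level w = 3 → deg G w = 1) :
    sigmaIndex G =
      (n : ℤ) * (p : ℤ) * (r : ℤ) * (s : ℤ) ^ 3 +
      (p : ℤ) * ((n : ℤ) - 2) * ((p : ℤ) + 1 - (r : ℤ)) ^ 2 +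
      2 * (p : ℤ) * ((p : ℤ) - (r : ℤ)) ^ 2 +
      (n : ℤ) * (p : ℤ) * (r : ℤ) * ((r : ℤ) - (s : ℤ)) ^ 2 + 2 := by
  classical
  have hlvlv : ∀ i : Fin n, level (v i) = 0 := fun i => (hlevel0 _).mpr ⟨i, rfl⟩
  have hdegv : ∀ i : Fin n, deg G (v i)
      = if (i : ℕ) = 0 ∨ (i : ℕ) = n - 1 then p + 1 else p + 2 := by
    intro i
    by_cases h0 : (i : ℕ) = 0
    · rw [if_pos (Or.inl h0)]
      have hi : i = ⟨0, by omega⟩ := Fin.ext h0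
      rw [hi]; exact hdegEnd.1
    · by_cases h1 : (i : ℕ) = n - 1
      · rw [if_pos (Or.inr h1)]
        have hi : i = ⟨n - 1, by omega⟩ := Fin.ext h1
        rw [hi]; exact hdegEnd.2
      · rw [if_neg (by tauto)]
        exact hdegInt i (by omega) (by omega)
  have hc0 : ∀ i : Fin n,
      ((G.neighborFinset (v i)).filter (fun x => level x = 1)).card = p :=
    fun i => by rw [← nbrCount_eq]; exact hchild0 i
  have hc1 : ∀ w, level w = 1 →
      ((G.neighborFinset w).filter (fun x => level x = 2)).card = r :=
    fun w hw => by rw [← nbrCount_eq]; exact hchild1 w hw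
  have hc2 : ∀ w, level w = 2 →
      ((G.neighborFinset w).filter (fun x => level x = 3)).card = s :=
    fun w hw => by rw [← nbrCount_eq]; exact hchild2 w hw
  have hdegcard : ∀ w, (G.neighborFinset w).card = deg G w := fun w => by
    rw [deg_eq]; rfl
  have hparent1 : ∀ w, level w = 1 →
      ((G.neighborFinset w).filter (fun x => level x = 0)).card = 1 := by
    intro w hw
    have hsplit := Finset.card_filter_add_card_filter_not
      (s := G.neighborFinset w) (p := fun x => level x = 0)
    have hneg : (G.neighborFinset w).filter (fun x => ¬ level x = 0)
        = (G.neighborFinset w).filter (fun x => level x = 2) := by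
      apply Finset.filter_congr
      intro x hx
      rw [SimpleGraph.mem_neighborFinset] at hx
      rcases hconsec w x hx with h | h | h <;> omega
    rw [hneg, hc1 w hw, hdegcard, hdeg1 w hw] at hsplit
    omega
  have hparent2 : ∀ w, level w = 2 →
      ((G.neighborFinset w).filter (fun x => level x = 1)).card = 1 := by
    intro w hw
    have hsplit := Finset.card_filter_add_card_filter_not
      (s := G.neighborFinset w) (p := fun x => level x = 1)
    have hneg : (G.neighborFinset w).filter (fun x => ¬ level x = 1)
        = (G.neighborFinset w).filter (fun x => level x = 3) := by
      apply Finset.filter_congr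
      intro x hx
      rw [SimpleGraph.mem_neighborFinset] at hx
      rcases hconsec w x hx with h | h | h <;> omega
    rw [hneg, hc2 w hw, hdegcard, hdeg2 w hw] at hsplit
    omega
  have hL0 : (univ.filter (fun w => level w = 0)) = univ.image v := by
    ext w; simp [hlevel0 w, eq_comm]
  have hcardL1 : (univ.filter (fun w => level w = 1)).card = n * p := by
    calc (univ.filter (fun w => level w = 1)).card
        = ∑ w ∈ univ.filter (fun w => level w = 1),
            ((G.neighborFinset w).filter (fun x => level x = 0)).card := by
          rw [Finset.sum_congr rfl (fun w hw => hparent1 w (Finset.mem_filter.mp hw).2),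
            Finset.sum_const, smul_eq_mul, mul_one]
      _ = ∑ x ∈ univ.filter (fun x => level x = 0),
            ((G.neighborFinset x).filter (fun w => level w = 1)).card :=
          double_count G _ _
      _ = n * p := by
          rw [hL0, Finset.sum_image (fun a _ b _ h => hinj h),
            Finset.sum_congr rfl (fun i _ => hc0 i), Finset.sum_const,
            Finset.card_univ, Fintype.card_fin, smul_eq_mul]
  have hcardL2 : (univ.filter (fun w => level w = 2)).card = n * p * r := by
    calc (univ.filter (fun w => level w = 2)).card
        = ∑ w ∈ univ.filter (fun w => level w = 2),
            ((G.neighborFinset w).filter (fun x => level x = 1)).card := by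
          rw [Finset.sum_congr rfl (fun w hw => hparent2 w (Finset.mem_filter.mp hw).2),
            Finset.sum_const, smul_eq_mul, mul_one]
      _ = ∑ x ∈ univ.filter (fun x => level x = 1),
            ((G.neighborFinset x).filter (fun w => level w = 2)).card :=
          double_count G _ _
      _ = n * p * r := by
          rw [Finset.sum_congr rfl (fun w hw => hc1 w (Finset.mem_filter.mp hw).2),
            Finset.sum_const, hcardL1, smul_eq_mul]
  -- partition of the edge sum by level pairs
  rw [sigmaIndex_eq_s8]
  have hmaps : ∀ e ∈ G.edgeFinset,
      lvlPair level e ∈ ({(0,0), (0,1), (1,2), (2,3)} : Finset (ℕ × ℕ)) := by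
    intro e he
    induction e using Sym2.ind with
    | _ u x =>
      rw [SimpleGraph.mem_edgeFinset, SimpleGraph.mem_edgeSet] at he
      have h3u := hlevelle u
      have h3x := hlevelle x
      rw [lvlPair_mk]
      rcases hconsec u x he with ⟨h1, h2⟩ | h | h
      · simp [h1, h2]
      · have hu : level u = 0 ∨ level u = 1 ∨ level u = 2 := by omega
        rw [h]
        rcases hu with h' | h' | h' <;> rw [h'] <;> decide
      · have hx : level x = 0 ∨ level x = 1 ∨ level x = 2 := by omega
        rw [h]
        rcases hx with h' | h' | h' <;> rw [h'] <;> decide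
  rw [← Finset.sum_fiberwise_of_maps_to hmaps (edgeVal G)]
  rw [show ({(0,0), (0,1), (1,2), (2,3)} : Finset (ℕ × ℕ))
      = insert (0,0) (insert (0,1) (insert (1,2) {(2,3)})) from rfl]
  rw [Finset.sum_insert (by decide), Finset.sum_insert (by decide),
    Finset.sum_insert (by decide), Finset.sum_singleton]
  rw [class_sum G level (by norm_num : (0:ℕ) < 1) (edgeVal G),
    class_sum G level (by norm_num : (1:ℕ) < 2) (edgeVal G),
    class_sum G level (by norm_num : (2:ℕ) < 3) (edgeVal G)]
  -- class (0,0)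
  have hC00 : ∑ e ∈ G.edgeFinset.filter (fun e => lvlPair level e = (0, 0)), edgeVal G e
      = 2 := by
    have hlt1 : ∀ {k : ℕ}, k ∈ Finset.range (n - 1) → k < n := fun hk => by
      have := Finset.mem_range.mp hk; omega
    have hlt2 : ∀ {k : ℕ}, k ∈ Finset.range (n - 1) → k + 1 < n := fun hk => by
      have := Finset.mem_range.mp hk; omega
    have htrans : ∑ e ∈ G.edgeFinset.filter (fun e => lvlPair level e = (0, 0)), edgeVal G e
        = ∑ k ∈ Finset.range (n - 1), (if k = 0 ∨ k = n - 2 then (1:ℤ) else 0) := by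
      symm
      refine Finset.sum_bij
        (fun k hk => s(v ⟨k, hlt1 hk⟩, v ⟨k + 1, hlt2 hk⟩)) ?_ ?_ ?_ ?_
      · intro k hk
        rw [Finset.mem_filter, SimpleGraph.mem_edgeFinset, SimpleGraph.mem_edgeSet,
          lvlPair_mk, hlvlv, hlvlv]
        exact ⟨(hspine _ _).mpr (Or.inl rfl), by simp⟩
      · intro a ha b hb heq
        rw [Sym2.eq_iff] at heq
        rcases heq with ⟨h1, h2⟩ | ⟨h1, h2⟩
        · exact congrArg Fin.val (hinj h1)
        · have e1 : a = b + 1 := congrArg Fin.val (hinj h1)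
          have e2 : a + 1 = b := congrArg Fin.val (hinj h2)
          omega
      · intro e he
        rw [Finset.mem_filter] at he
        obtain ⟨he1, he2⟩ := he
        induction e using Sym2.ind with
        | _ u x =>
          rw [SimpleGraph.mem_edgeFinset, SimpleGraph.mem_edgeSet] at he1
          rw [lvlPair_mk, Prod.mk.injEq] at he2
          have hmax := he2.2
          rw [Nat.max_eq_zero_iff] at hmax
          obtain ⟨i, rfl⟩ := (hlevel0 u).mp hmax.1
          obtain ⟨j, rfl⟩ := (hlevel0 x).mp hmax.2
          rcases (hspine i j).mp he1 with hij | hij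
          · have hj := j.isLt
            have hmem : (i : ℕ) ∈ Finset.range (n - 1) := Finset.mem_range.mpr (by omega)
            refine ⟨(i : ℕ), hmem, ?_⟩
            have e1 : (⟨(i : ℕ), hlt1 hmem⟩ : Fin n) = i := Fin.ext rfl
            have e2 : (⟨(i : ℕ) + 1, hlt2 hmem⟩ : Fin n) = j := Fin.ext hij
            rw [e1, e2]
          · have hi := i.isLt
            have hmem : (j : ℕ) ∈ Finset.range (n - 1) := Finset.mem_range.mpr (by omega)
            refine ⟨(j : ℕ), hmem, ?_⟩
            have e1 : (⟨(j : ℕ), hlt1 hmem⟩ : Fin n) = j := Fin.ext rfl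
            have e2 : (⟨(j : ℕ) + 1, hlt2 hmem⟩ : Fin n) = i := Fin.ext hij
            rw [e1, e2]
            exact Sym2.eq_swap
      · intro k hk
        have hk' := Finset.mem_range.mp hk
        rw [edgeVal_mk, hdegv ⟨k, hlt1 hk⟩, hdegv ⟨k + 1, hlt2 hk⟩]
        simp only []
        by_cases h0 : k = 0
        · subst h0
          rw [if_pos (Or.inl rfl), if_pos (by norm_num : (0:ℕ) = 0 ∨ (0:ℕ) = n - 1),
            if_neg (by omega)]
          push_cast; ring
        · by_cases h1 : k = n - 2
          · rw [if_pos (Or.inr h1), if_neg (by omega), if_pos (by omega)]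
            push_cast; ring
          · rw [if_neg (by omega), if_neg (by omega), if_neg (by omega)]
            push_cast; ring
    rw [htrans, Finset.sum_ite, Finset.sum_const, Finset.sum_const]
    have hfilter : (Finset.range (n-1)).filter (fun k => k = 0 ∨ k = n-2) = {0, n-2} := by
      ext k
      simp only [Finset.mem_filter, Finset.mem_range, Finset.mem_insert, Finset.mem_singleton]
      omega
    rw [hfilter, Finset.card_insert_of_notMem (by simp; omega), Finset.card_singleton]
    simp
  rw [hC00]
  -- class (0,1)
  have hC01 : ∑ w ∈ univ.filter (fun w => level w = 0),
      ∑ x ∈ (G.neighborFinset w).filter (fun x => level x = 1), edgeVal G s(w, x)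
      = 2 * ((p : ℤ) * (((p : ℤ) + 1) - (1 + r)) ^ 2)
        + ((n : ℤ) - 2) * ((p : ℤ) * (((p : ℤ) + 2) - (1 + r)) ^ 2) := by
    have hinner : ∀ i : Fin n,
        ∑ x ∈ (G.neighborFinset (v i)).filter (fun x => level x = 1), edgeVal G s(v i, x)
          = (if (i : ℕ) = 0 ∨ (i : ℕ) = n - 1
              then (p : ℤ) * (((p : ℤ) + 1) - (1 + r)) ^ 2
              else (p : ℤ) * (((p : ℤ) + 2) - (1 + r)) ^ 2) := by
      intro i
      have hval : ∀ x ∈ (G.neighborFinset (v i)).filter (fun x => level x = 1),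
          edgeVal G s(v i, x) = ((deg G (v i) : ℤ) - (1 + r)) ^ 2 := by
        intro x hx
        rw [edgeVal_mk, hdeg1 x (Finset.mem_filter.mp hx).2]
        push_cast; ring
      rw [Finset.sum_congr rfl hval, Finset.sum_const, hc0 i, nsmul_eq_mul, hdegv i]
      by_cases h : (i : ℕ) = 0 ∨ (i : ℕ) = n - 1
      · rw [if_pos h, if_pos h]; push_cast; ring
      · rw [if_neg h, if_neg h]; push_cast; ring
    rw [hL0, Finset.sum_image (fun a _ b _ h => hinj h),
      Finset.sum_congr rfl (fun i _ => hinner i)]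
    rw [Fin.sum_univ_eq_sum_range
      (fun k => if k = 0 ∨ k = n - 1 then (p : ℤ) * (((p : ℤ) + 1) - (1 + r)) ^ 2
        else (p : ℤ) * (((p : ℤ) + 2) - (1 + r)) ^ 2) n]
    rw [Finset.sum_ite, Finset.sum_const, Finset.sum_const]
    have hfilter : (Finset.range n).filter (fun k => k = 0 ∨ k = n-1) = {0, n-1} := by
      ext k
      simp only [Finset.mem_filter, Finset.mem_range, Finset.mem_insert, Finset.mem_singleton]
      omega
    have hcard1 : ((Finset.range n).filter (fun k => k = 0 ∨ k = n-1)).card = 2 := by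
      rw [hfilter, Finset.card_insert_of_notMem (by simp; omega), Finset.card_singleton]
    have hcard2 : ((Finset.range n).filter (fun k => ¬(k = 0 ∨ k = n-1))).card = n - 2 := by
      have hh := Finset.card_filter_add_card_filter_not
        (s := Finset.range n) (p := fun k => k = 0 ∨ k = n-1)
      rw [hcard1, Finset.card_range] at hh
      omega
    rw [hcard1, hcard2, nsmul_eq_mul, nsmul_eq_mul]
    have hcast : ((n - 2 : ℕ) : ℤ) = (n : ℤ) - 2 := by omega
    rw [hcast]
    norm_num
  rw [hC01]
  -- class (1,2)
  have hC12 : ∑ w ∈ univ.filter (fun w => level w = 1),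
      ∑ x ∈ (G.neighborFinset w).filter (fun x => level x = 2), edgeVal G s(w, x)
      = ((n * p : ℕ) : ℤ) * ((r : ℤ) * (((1 : ℤ) + r) - (1 + s)) ^ 2) := by
    have hinner : ∀ w ∈ univ.filter (fun w => level w = 1),
        ∑ x ∈ (G.neighborFinset w).filter (fun x => level x = 2), edgeVal G s(w, x)
          = (r : ℤ) * (((1 : ℤ) + r) - (1 + s)) ^ 2 := by
      intro w hw
      have hw1 := (Finset.mem_filter.mp hw).2
      have hval : ∀ x ∈ (G.neighborFinset w).filter (fun x => level x = 2),
          edgeVal G s(w, x) = (((1 : ℤ) + r) - (1 + s)) ^ 2 := by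
        intro x hx
        rw [edgeVal_mk, hdeg1 w hw1, hdeg2 x (Finset.mem_filter.mp hx).2]
        push_cast; ring
      rw [Finset.sum_congr rfl hval, Finset.sum_const, hc1 w hw1, nsmul_eq_mul]
    rw [Finset.sum_congr rfl hinner, Finset.sum_const, hcardL1, nsmul_eq_mul]
  rw [hC12]
  -- class (2,3)
  have hC23 : ∑ w ∈ univ.filter (fun w => level w = 2),
      ∑ x ∈ (G.neighborFinset w).filter (fun x => level x = 3), edgeVal G s(w, x)
      = ((n * p * r : ℕ) : ℤ) * ((s : ℤ) * (((1 : ℤ) + s) - 1) ^ 2) := by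
    have hinner : ∀ w ∈ univ.filter (fun w => level w = 2),
        ∑ x ∈ (G.neighborFinset w).filter (fun x => level x = 3), edgeVal G s(w, x)
          = (s : ℤ) * (((1 : ℤ) + s) - 1) ^ 2 := by
      intro w hw
      have hw2 := (Finset.mem_filter.mp hw).2
      have hval : ∀ x ∈ (G.neighborFinset w).filter (fun x => level x = 3),
          edgeVal G s(w, x) = (((1 : ℤ) + s) - 1) ^ 2 := by
        intro x hx
        rw [edgeVal_mk, hdeg2 w hw2, hdeg3 x (Finset.mem_filter.mp hx).2]
        push_cast; ring
      rw [Finset.sum_congr rfl hval, Finset.sum_const, hc2 w hw2, nsmul_eq_mul]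
    rw [Finset.sum_congr rfl hinner, Finset.sum_const, hcardL2, nsmul_eq_mul]
  rw [hC23]
  push_cast
  ring
end

section
/- Let T be a tree of order n ≥ 5 with exactly p pendant vertices, where 3 ≤ p ≤ n − 2. Then σ(T) ≤ (p − 1)³ + (p − 2)² + 1. -/
open Finset

variable {V : Type*}

/-- The number of pendant (degree-one) vertices of `G`. -/
noncomputable def pendantCount [Fintype V] (G : SimpleGraph V) : ℕ := by
  classical
  exact (Finset.univ.filter (fun w => G.degree w = 1)).card

set_option linter.unusedSectionVars false

section Aux

variable [Fintype V] (G : SimpleGraph V) [DecidableEq V] [DecidableRel G.Adj]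

private lemma aux_sum_dart_eq (f : V → V → ℤ) :
    ∑ d : G.Dart, f d.toProd.1 d.toProd.2 = ∑ u, ∑ v ∈ G.neighborFinset u, f u v := by
  rw [Finset.sum_sigma' univ (fun u => G.neighborFinset u) (fun u v => f u v)]
  refine Finset.sum_bij' (fun (d : G.Dart) (_ : d ∈ univ) => (⟨d.toProd.1, d.toProd.2⟩ : Σ _ : V, V))
    (fun x hx => SimpleGraph.Dart.mk (x.1, x.2) ?_) (fun d _ => ?_) (fun x hx => mem_univ _)
    (fun d _ => ?_) (fun x hx => ?_) (fun d _ => rfl)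
  · have := (Finset.mem_sigma.mp hx).2
    exact (SimpleGraph.mem_neighborFinset ..).mp this
  · simp only [Finset.mem_sigma, mem_univ, true_and, SimpleGraph.mem_neighborFinset]
    exact d.adj
  · rfl
  · rfl

private lemma aux_sum_dart_edge (f : V → V → ℤ) (hf : ∀ u v, f u v = f v u) :
    ∑ d : G.Dart, f d.toProd.1 d.toProd.2 = 2 * ∑ e ∈ G.edgeFinset, Sym2.lift ⟨f, hf⟩ e := by
  rw [← Finset.sum_fiberwise_of_maps_to (g := SimpleGraph.Dart.edge)
      (fun d _ => (SimpleGraph.mem_edgeFinset).mpr d.edge_mem), Finset.mul_sum]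
  refine Finset.sum_congr rfl fun e he => ?_
  rw [SimpleGraph.mem_edgeFinset] at he
  induction e using Sym2.ind with
  | _ v w =>
    rw [SimpleGraph.mem_edgeSet] at he
    let d : G.Dart := ⟨(v, w), he⟩
    have hfib : (univ.filter (fun d' : G.Dart => d'.edge = s(v, w))) = {d, d.symm} := by
      have := d.edge_fiber
      exact this
    rw [hfib, Finset.sum_insert (by simp [d.symm_ne.symm]), Finset.sum_singleton]
    simp only [Sym2.lift_mk]
    show f v w + f w v = 2 * f v w
    rw [hf w v]; ring

private lemma aux_pair_sum (f : V → V → ℤ) (hf : ∀ u v, f u v = f v u) :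
    2 * ∑ e ∈ G.edgeFinset, Sym2.lift ⟨f, hf⟩ e = ∑ u, ∑ v ∈ G.neighborFinset u, f u v := by
  rw [← aux_sum_dart_edge G f hf, aux_sum_dart_eq G f]

private lemma aux_pair_swap (f : V → V → ℤ) :
    ∑ u, ∑ v ∈ G.neighborFinset u, f u v = ∑ u, ∑ v ∈ G.neighborFinset u, f v u := by
  have h : ∀ (g : V → V → ℤ), ∑ u, ∑ v ∈ G.neighborFinset u, g u v
      = ∑ u : V, ∑ v : V, if G.Adj u v then g u v else 0 := by
    intro g
    refine Finset.sum_congr rfl fun u _ => ?_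
    rw [SimpleGraph.neighborFinset_eq_filter, Finset.sum_filter]
  rw [h, h, Finset.sum_comm]
  refine Finset.sum_congr rfl fun u _ => Finset.sum_congr rfl fun v _ => ?_
  by_cases hadj : G.Adj u v
  · rw [if_pos hadj, if_pos hadj.symm]
  · rw [if_neg hadj, if_neg (fun h' => hadj h'.symm)]

private lemma aux_second_leaf {G : SimpleGraph V} [DecidableRel G.Adj]
    {a b c : V} (h : G.Adj a c) (P : G.Walk c b) (hP : (SimpleGraph.Walk.cons h P).IsPath)
    (hc : G.degree c = 1) : b = c := by
  cases P with
  | nil => rfl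
  | @cons _ c2 _ h2 P'' =>
    exfalso
    have hc2 : c2 = a := by
      have h1 : c2 ∈ G.neighborFinset c := (SimpleGraph.mem_neighborFinset ..).mpr h2
      have h2' : a ∈ G.neighborFinset c := (SimpleGraph.mem_neighborFinset ..).mpr h.symm
      have hcard : (G.neighborFinset c).card ≤ 1 := by
        rw [SimpleGraph.card_neighborFinset_eq_degree, hc]
      exact Finset.card_le_one.mp hcard _ h1 _ h2'
    rw [SimpleGraph.Walk.cons_isPath_iff] at hP
    subst hc2
    exact hP.2 (by simp [SimpleGraph.Walk.support_cons])

end Aux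

set_option maxHeartbeats 1600000 in
/-- a tree of order `n ≥ 5` with `p` pendant vertices, `3 ≤ p ≤ n − 2`,
satisfies `σ(T) ≤ (p−1)³ + (p−2)² + 1`. -/
theorem sigma_tree_pendant_upper_bound {V : Type*} [Fintype V] (G : SimpleGraph V)
    (n p : ℕ) (htree : G.IsTree) (hn : Fintype.card V = n) (hn5 : 5 ≤ n)
    (hp : pendantCount G = p) (hp3 : 3 ≤ p) (hpn : p ≤ n - 2) :
    sigmaIndex G ≤ ((p : ℤ) - 1) ^ 3 + ((p : ℤ) - 2) ^ 2 + 1 := by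
  classical
  -- normalize the definitions (instance bridging)
  have hσdef : sigmaIndex G = ∑ e ∈ G.edgeFinset,
      Sym2.lift ⟨fun u v => ((G.degree u : ℤ) - (G.degree v : ℤ)) ^ 2, fun u v => by ring⟩ e := by
    unfold sigmaIndex
    congr!
  have hpdef : (univ.filter (fun w => G.degree w = 1)).card = p := by
    rw [← hp]; unfold pendantCount; congr!
  have hm : G.edgeFinset.card + 1 = n := by
    rw [← hn]; exact htree.card_edgeFinset
  have hconn : G.Connected := htree.isConnected
  -- every vertex has positive degree
  have hdegpos : ∀ v : V, 0 < G.degree v := by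
    intro v
    rw [SimpleGraph.degree_pos_iff_exists_adj]
    have h2 : 1 < Fintype.card V := by omega
    obtain ⟨w, hw⟩ := Fintype.exists_ne_of_one_lt_card h2 v
    obtain ⟨P⟩ := hconn.preconnected v w
    cases P with
    | nil => exact absurd rfl hw
    | cons h _ => exact ⟨_, h⟩
  -- no two adjacent pendant vertices
  have hnoleafadj : ∀ x y : V, G.Adj x y → G.degree x = 1 → G.degree y = 1 → False := by
    intro x y hxy hx hy
    have hz : ∃ z : V, z ≠ x ∧ z ≠ y := by
      by_contra hcon
      push_neg at hcon
      have hsub : (univ : Finset V) ⊆ {x, y} := by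
        intro z _
        simp only [Finset.mem_insert, Finset.mem_singleton]
        by_cases hzx : z = x
        · exact Or.inl hzx
        · exact Or.inr (hcon z hzx)
      have := Finset.card_le_card hsub
      have h2 : ({x, y} : Finset V).card ≤ 2 := Finset.card_insert_le x {y} |>.trans (by simp)
      rw [Finset.card_univ] at this
      omega
    obtain ⟨z, hzx, hzy⟩ := hz
    obtain ⟨P0⟩ := hconn.preconnected x z
    obtain ⟨P, hPp⟩ := P0.toPath
    cases P with
    | nil => exact hzx rfl
    | @cons _ c _ h Q =>
      have hcy : c = y := by
        have h1 : c ∈ G.neighborFinset x := (SimpleGraph.mem_neighborFinset ..).mpr h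
        have h2' : y ∈ G.neighborFinset x := (SimpleGraph.mem_neighborFinset ..).mpr hxy
        have hcard : (G.neighborFinset x).card ≤ 1 := by
          rw [SimpleGraph.card_neighborFinset_eq_degree, hx]
        exact Finset.card_le_one.mp hcard _ h1 _ h2'
      have hzc := aux_second_leaf h Q hPp (by rw [hcy]; exact hy)
      exact hzy (hzc.trans hcy)
  -- internal vertices
  set L : Finset V := univ.filter (fun v => G.degree v = 1) with hL
  set I : Finset V := univ.filter (fun v => ¬ G.degree v = 1) with hI
  have hLI : L.card + I.card = n := by
    rw [← hn, ← Finset.card_univ]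
    exact Finset.card_filter_add_card_filter_not _
  have hIcard : (I.card : ℤ) = (n : ℤ) - (p : ℤ) := by
    have : L.card = p := hpdef
    omega
  have hIdeg : ∀ v ∈ I, 2 ≤ G.degree v := by
    intro v hv
    have h1 := (Finset.mem_filter.mp hv).2
    have h2 := hdegpos v
    omega
  -- every internal vertex has an internal neighbor
  have hinternal_nbr : ∀ u : V, ¬ G.degree u = 1 → ∃ v, G.Adj u v ∧ ¬ G.degree v = 1 := by
    intro u hu
    by_contra hcon
    push_neg at hcon
    have hIcard2 : 2 ≤ I.card := by
      have : L.card = p := hpdef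
      omega
    have huI : u ∈ I := Finset.mem_filter.mpr ⟨mem_univ u, hu⟩
    obtain ⟨w, hwI, hwu⟩ := Finset.exists_mem_ne (s := I) (by omega) u
    obtain ⟨P0⟩ := hconn.preconnected u w
    obtain ⟨P, hPp⟩ := P0.toPath
    cases P with
    | nil => exact hwu rfl
    | @cons _ c _ h Q =>
      have hcleaf : G.degree c = 1 := hcon c h
      have hwc := aux_second_leaf h Q hPp hcleaf
      have := (Finset.mem_filter.mp hwI).2
      exact this (hwc ▸ hcleaf)
  -- degree sum
  have hdegsum : ∑ v : V, (G.degree v : ℤ) = 2 * ((n : ℤ) - 1) := by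
    have h1 := G.sum_degrees_eq_twice_card_edges
    have h2 : ((∑ v, G.degree v : ℕ) : ℤ) = ∑ v, (G.degree v : ℤ) := by
      push_cast; rfl
    rw [← h2, h1]
    push_cast
    omega
  have hIsum : ∑ v ∈ I, ((G.degree v : ℤ) - 2) = (p : ℤ) - 2 := by
    have hsplit : ∑ v ∈ L, ((G.degree v : ℤ) - 2) + ∑ v ∈ I, ((G.degree v : ℤ) - 2) = ∑ v : V, ((G.degree v : ℤ) - 2) :=
      Finset.sum_filter_add_sum_filter_not univ _ _
    have hLsum : ∑ v ∈ L, ((G.degree v : ℤ) - 2) = -(p : ℤ) := by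
      have : ∀ v ∈ L, (G.degree v : ℤ) - 2 = -1 := by
        intro v hv
        have := (Finset.mem_filter.mp hv).2
        simp [this]
      rw [Finset.sum_congr rfl this, Finset.sum_const, hpdef]
      simp
    have hUsum : ∑ v : V, ((G.degree v : ℤ) - 2) = -2 := by
      rw [Finset.sum_sub_distrib, hdegsum, Finset.sum_const, Finset.card_univ, hn]
      push_cast
      ring
    linarith
  have hdle : ∀ v ∈ I, (G.degree v : ℤ) ≤ (p : ℤ) := by
    intro v hv
    have h1 : (G.degree v : ℤ) - 2 ≤ ∑ w ∈ I, ((G.degree w : ℤ) - 2) := by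
      refine Finset.single_le_sum (f := fun w => (G.degree w : ℤ) - 2) (fun w hw => ?_) hv
      have := hIdeg w hw
      simp only [sub_nonneg]
      exact_mod_cast this
    rw [hIsum] at h1
    linarith
  -- the indicator of internal vertices
  set qi : V → ℤ := fun v => if 2 ≤ G.degree v then 1 else 0 with hqi
  have hqi_nonneg : ∀ v, 0 ≤ qi v := by
    intro v; simp only [hqi]; split <;> norm_num
  -- main pair sum
  have h2σ : 2 * sigmaIndex G = ∑ u, ∑ v ∈ G.neighborFinset u, ((G.degree u : ℤ) - (G.degree v : ℤ)) ^ 2 := by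
    rw [hσdef]
    exact aux_pair_sum G (fun u v => ((G.degree u : ℤ) - (G.degree v : ℤ)) ^ 2)
      (fun u v => by ring)
  -- pointwise inequality
  have hkey : ∀ u : V, ∀ v ∈ G.neighborFinset u, ((G.degree u : ℤ) - (G.degree v : ℤ)) ^ 2 ≤
      ((G.degree u : ℤ) - 1) ^ 2 + ((G.degree v : ℤ) - 1) ^ 2 - 2 * (qi u * qi v * (((G.degree u : ℤ) - 2) + ((G.degree v : ℤ) - 2) + 1)) := by
    intro u v hv
    have huv : G.Adj u v := (SimpleGraph.mem_neighborFinset ..).mp hv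
    have hu := hdegpos u
    have hvp := hdegpos v
    by_cases h2u : 2 ≤ G.degree u
    · by_cases h2v : 2 ≤ G.degree v
      · simp only [hqi, if_pos h2u, if_pos h2v]
        have h1 : (2 : ℤ) ≤ (G.degree u : ℤ) := by exact_mod_cast h2u
        have h2 : (2 : ℤ) ≤ (G.degree v : ℤ) := by exact_mod_cast h2v
        nlinarith [mul_nonneg (by linarith : (0:ℤ) ≤ (G.degree u : ℤ) - 2) (by linarith : (0:ℤ) ≤ (G.degree v : ℤ) - 2)]
      · simp only [hqi, if_neg h2v, mul_zero, zero_mul, mul_zero, sub_zero]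
        have h1 : (G.degree v : ℤ) = 1 := by exact_mod_cast (by omega : G.degree v = 1)
        rw [h1]; nlinarith []
    · simp only [hqi, if_neg h2u, zero_mul, mul_zero, sub_zero]
      have h1 : (G.degree u : ℤ) = 1 := by exact_mod_cast (by omega : G.degree u = 1)
      rw [h1]; nlinarith []
  have hstep : 2 * sigmaIndex G ≤
      ∑ u, ∑ v ∈ G.neighborFinset u,
        (((G.degree u : ℤ) - 1) ^ 2 + ((G.degree v : ℤ) - 1) ^ 2 - 2 * (qi u * qi v * (((G.degree u : ℤ) - 2) + ((G.degree v : ℤ) - 2) + 1))) := by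
    rw [h2σ]
    exact Finset.sum_le_sum fun u _ => Finset.sum_le_sum (hkey u)
  -- split the sum
  have hsplit : ∑ u, ∑ v ∈ G.neighborFinset u,
      (((G.degree u : ℤ) - 1) ^ 2 + ((G.degree v : ℤ) - 1) ^ 2 - 2 * (qi u * qi v * (((G.degree u : ℤ) - 2) + ((G.degree v : ℤ) - 2) + 1)))
      = (∑ u, ∑ v ∈ G.neighborFinset u, ((G.degree u : ℤ) - 1) ^ 2)
        + (∑ u, ∑ v ∈ G.neighborFinset u, ((G.degree v : ℤ) - 1) ^ 2)
        - 2 * (∑ u, ∑ v ∈ G.neighborFinset u, qi u * qi v * ((G.degree u : ℤ) - 2))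
      - 2 * (∑ u, ∑ v ∈ G.neighborFinset u, qi u * qi v * ((G.degree v : ℤ) - 2))
      - 2 * (∑ u, ∑ v ∈ G.neighborFinset u, qi u * qi v) := by
    have e : ∀ u v : V, ((G.degree u : ℤ) - 1) ^ 2 + ((G.degree v : ℤ) - 1) ^ 2
        - 2 * (qi u * qi v * (((G.degree u : ℤ) - 2) + ((G.degree v : ℤ) - 2) + 1))
        = ((G.degree u : ℤ) - 1) ^ 2 + (((G.degree v : ℤ) - 1) ^ 2
          - ((2 : ℤ) * (qi u * qi v * ((G.degree u : ℤ) - 2))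
            + ((2 : ℤ) * (qi u * qi v * ((G.degree v : ℤ) - 2)) + (2 : ℤ) * (qi u * qi v)))) :=
      fun u v => by ring
    simp only [e, Finset.sum_add_distrib, Finset.sum_sub_distrib, ← Finset.mul_sum]
    ring
  -- constant inner sums
  have hconst : ∀ (g : V → ℤ), ∑ u, ∑ _v ∈ G.neighborFinset u, g u = ∑ u, (G.degree u : ℤ) * g u := by
    intro g
    refine Finset.sum_congr rfl fun u _ => ?_
    rw [Finset.sum_const, SimpleGraph.card_neighborFinset_eq_degree, nsmul_eq_mul]
  -- T1 and T2
  have hT1 : ∑ u, ∑ v ∈ G.neighborFinset u, ((G.degree u : ℤ) - 1) ^ 2 = ∑ u, (G.degree u : ℤ) * ((G.degree u : ℤ) - 1) ^ 2 :=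
    hconst (fun u => ((G.degree u : ℤ) - 1) ^ 2)
  have hT2 : ∑ u, ∑ v ∈ G.neighborFinset u, ((G.degree v : ℤ) - 1) ^ 2 = ∑ u, (G.degree u : ℤ) * ((G.degree u : ℤ) - 1) ^ 2 := by
    rw [aux_pair_swap G (fun u v => ((G.degree v : ℤ) - 1) ^ 2)]
    exact hconst (fun u => ((G.degree u : ℤ) - 1) ^ 2)
  -- C1 lower bound
  have hC1 : (p : ℤ) - 2 ≤ ∑ u, ∑ v ∈ G.neighborFinset u, qi u * qi v * ((G.degree u : ℤ) - 2) := by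
    have hpt : ∀ u : V, (if u ∈ I then (G.degree u : ℤ) - 2 else 0) ≤
        ∑ v ∈ G.neighborFinset u, qi u * qi v * ((G.degree u : ℤ) - 2) := by
      intro u
      by_cases hu : u ∈ I
      · rw [if_pos hu]
        have hu1 := (Finset.mem_filter.mp hu).2
        have h2u := hIdeg u hu
        have hqiu : qi u = 1 := by simp [hqi, h2u]
        have hdu2 : (0 : ℤ) ≤ (G.degree u : ℤ) - 2 := by
          simp only [sub_nonneg]; exact_mod_cast h2u
        obtain ⟨v0, hv0adj, hv0int⟩ := hinternal_nbr u hu1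
        have hv0mem : v0 ∈ G.neighborFinset u := (SimpleGraph.mem_neighborFinset ..).mpr hv0adj
        have hqiv0 : qi v0 = 1 := by
          have := hdegpos v0
          simp [hqi, (by omega : 2 ≤ G.degree v0)]
        calc (G.degree u : ℤ) - 2 = qi u * qi v0 * ((G.degree u : ℤ) - 2) := by rw [hqiu, hqiv0]; ring
          _ ≤ ∑ v ∈ G.neighborFinset u, qi u * qi v * ((G.degree u : ℤ) - 2) := by
              refine Finset.single_le_sum (f := fun v => qi u * qi v * ((G.degree u : ℤ) - 2)) (fun v _ => ?_) hv0mem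
              exact mul_nonneg (mul_nonneg (hqi_nonneg u) (hqi_nonneg v)) hdu2
      · rw [if_neg hu]
        refine Finset.sum_nonneg fun v _ => ?_
        have hu1 : G.degree u = 1 := by
          by_contra hc
          exact hu (Finset.mem_filter.mpr ⟨mem_univ u, hc⟩)
        have hqiu : qi u = 0 := by simp [hqi]; omega
        rw [hqiu]; ring_nf; simp
    calc (p : ℤ) - 2 = ∑ u ∈ I, ((G.degree u : ℤ) - 2) := hIsum.symm
      _ = ∑ u : V, (if u ∈ I then (G.degree u : ℤ) - 2 else 0) := by
          rw [Finset.sum_ite_mem, Finset.univ_inter]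
      _ ≤ _ := Finset.sum_le_sum fun u _ => hpt u
  -- C2 = C1 form
  have hC2 : (p : ℤ) - 2 ≤ ∑ u, ∑ v ∈ G.neighborFinset u, qi u * qi v * ((G.degree v : ℤ) - 2) := by
    rw [aux_pair_swap G (fun u v => qi u * qi v * ((G.degree v : ℤ) - 2))]
    calc (p : ℤ) - 2 ≤ ∑ u, ∑ v ∈ G.neighborFinset u, qi u * qi v * ((G.degree u : ℤ) - 2) := hC1
      _ = ∑ u, ∑ v ∈ G.neighborFinset u, qi v * qi u * ((G.degree u : ℤ) - 2) := by
          refine Finset.sum_congr rfl fun u _ => Finset.sum_congr rfl fun v _ => by ring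
  -- C3 exact value
  have hC3 : ∑ u, ∑ v ∈ G.neighborFinset u, qi u * qi v = 2 * ((n : ℤ) - 1) - 2 * (p : ℤ) := by
    set r : V → ℤ := fun v => if G.degree v = 1 then 1 else 0 with hr
    have hpt : ∀ u : V, ∀ v ∈ G.neighborFinset u, qi u * qi v = 1 - r u - r v := by
      intro u v hv
      have huv : G.Adj u v := (SimpleGraph.mem_neighborFinset ..).mp hv
      have hu := hdegpos u
      have hvp := hdegpos v
      by_cases h1u : G.degree u = 1
      · have h1v : ¬ G.degree v = 1 := fun h1v => hnoleafadj u v huv h1u h1v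
        simp [hqi, hr, h1u, h1v, (by omega : ¬ 2 ≤ G.degree u), (by omega : 2 ≤ G.degree v)]
      · by_cases h1v : G.degree v = 1
        · simp [hqi, hr, h1u, h1v, (by omega : 2 ≤ G.degree u), (by omega : ¬ 2 ≤ G.degree v)]
        · simp [hqi, hr, h1u, h1v, (by omega : 2 ≤ G.degree u), (by omega : 2 ≤ G.degree v)]
    have hsum1 : ∑ u, ∑ v ∈ G.neighborFinset u, (1 : ℤ) = 2 * ((n : ℤ) - 1) := by
      have := hconst (fun _ => (1 : ℤ))
      simp only [mul_one] at this
      rw [this, hdegsum]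
    have hsumr : ∑ u, ∑ v ∈ G.neighborFinset u, r u = (p : ℤ) := by
      rw [hconst r]
      have : ∀ u : V, (G.degree u : ℤ) * r u = r u := by
        intro u
        by_cases h1u : G.degree u = 1
        · simp [hr, h1u]
        · simp [hr, h1u]
      rw [Finset.sum_congr rfl fun u _ => this u]
      have : ∑ u : V, r u = ∑ u ∈ L, (1 : ℤ) := by
        rw [Finset.sum_filter]
      rw [this, Finset.sum_const, hpdef]
      simp
    have hsumr2 : ∑ u, ∑ v ∈ G.neighborFinset u, r v = (p : ℤ) := by
      rw [aux_pair_swap G (fun u v => r v)]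
      exact hsumr
    calc ∑ u, ∑ v ∈ G.neighborFinset u, qi u * qi v
        = ∑ u, ∑ v ∈ G.neighborFinset u, (1 - r u - r v) := by
          refine Finset.sum_congr rfl fun u _ => Finset.sum_congr rfl fun v hv => hpt u v hv
      _ = (∑ u, ∑ v ∈ G.neighborFinset u, (1:ℤ)) - (∑ u, ∑ v ∈ G.neighborFinset u, r u)
          - (∑ u, ∑ v ∈ G.neighborFinset u, r v) := by
          simp only [← Finset.sum_sub_distrib]
      _ = 2 * ((n : ℤ) - 1) - (p : ℤ) - (p : ℤ) := by rw [hsum1, hsumr, hsumr2]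
      _ = 2 * ((n : ℤ) - 1) - 2 * (p : ℤ) := by ring
  -- vertex sum bound
  have hT : ∑ u, (G.degree u : ℤ) * ((G.degree u : ℤ) - 1) ^ 2 ≤
      2 * ((n : ℤ) - (p : ℤ)) + ((p : ℤ) ^ 2 + 1) * ((p : ℤ) - 2) := by
    set B : V → ℤ := fun v => if G.degree v = 1 then 0 else 2 + ((p : ℤ) ^ 2 + 1) * ((G.degree v : ℤ) - 2)
      with hB
    have hpt : ∀ v : V, (G.degree v : ℤ) * ((G.degree v : ℤ) - 1) ^ 2 ≤ B v := by
      intro v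
      by_cases h1v : G.degree v = 1
      · have : (G.degree v : ℤ) = 1 := by simp [h1v]
        simp [hB, h1v, this]
      · have hvI : v ∈ I := Finset.mem_filter.mpr ⟨mem_univ v, h1v⟩
        have h2v : (2 : ℤ) ≤ (G.degree v : ℤ) := by
          exact_mod_cast hIdeg v hvI
        have hvle : (G.degree v : ℤ) ≤ (p : ℤ) := hdle v hvI
        simp only [hB, if_neg h1v]
        nlinarith [mul_nonneg (by linarith : (0:ℤ) ≤ (G.degree v : ℤ) - 2)
          (by nlinarith : (0:ℤ) ≤ (p : ℤ) ^ 2 - (G.degree v : ℤ) ^ 2)]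
    have hBsum : ∑ v : V, B v = 2 * ((n : ℤ) - (p : ℤ)) + ((p : ℤ) ^ 2 + 1) * ((p : ℤ) - 2) := by
      have hsplit2 : ∑ v ∈ L, B v + ∑ v ∈ I, B v = ∑ v : V, B v :=
        Finset.sum_filter_add_sum_filter_not univ _ _
      have hLB : ∑ v ∈ L, B v = 0 := by
        refine Finset.sum_eq_zero fun v hv => ?_
        have := (Finset.mem_filter.mp hv).2
        simp [hB, this]
      have hIB : ∑ v ∈ I, B v = 2 * ((n : ℤ) - (p : ℤ)) + ((p : ℤ) ^ 2 + 1) * ((p : ℤ) - 2) := by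
        have : ∀ v ∈ I, B v = 2 + ((p : ℤ) ^ 2 + 1) * ((G.degree v : ℤ) - 2) := by
          intro v hv
          have := (Finset.mem_filter.mp hv).2
          simp [hB, this]
        rw [Finset.sum_congr rfl this, Finset.sum_add_distrib, Finset.sum_const, ← Finset.mul_sum,
          hIsum, nsmul_eq_mul, hIcard]
        ring
      linarith
    calc ∑ u, (G.degree u : ℤ) * ((G.degree u : ℤ) - 1) ^ 2 ≤ ∑ v : V, B v := Finset.sum_le_sum fun v _ => hpt v
      _ = _ := hBsum
  -- final assembly
  have hfinal : 2 * sigmaIndex G ≤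
      2 * (2 * ((n : ℤ) - (p : ℤ)) + ((p : ℤ) ^ 2 + 1) * ((p : ℤ) - 2))
      - 2 * (((p : ℤ) - 2) + ((p : ℤ) - 2) + (2 * ((n : ℤ) - 1) - 2 * (p : ℤ))) := by
    rw [hsplit, hT1, hT2] at hstep
    have := hT
    linarith [hC1, hC2, hC3.ge, hC3.le, hstep]
  have hcast : (3 : ℤ) ≤ (p : ℤ) := by exact_mod_cast hp3
  nlinarith [hfinal]
end
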